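/- arXiv:0708.0506 — 3 statements merged into one kernel-verified Lean document; each statement's English description precedes it below -/
import Mathlib

section
/- Let b : [0,1]^k → ℝ have continuous mixed partial b^{(1,…,1)}. With A = {0,1}^k, M_β the averaging operator over coordinates where β_i = 1, and (N b)(x) = ∫₀^{x₁}⋯∫₀^{x_k} b^{(1,…,1)}(u) du, one has ∑_{β ∈ A} (−1)^{|β|} (M_β N b)(x) = ∑_{β ∈ A} (−1)^{|β|} (M_β b)(x) for all x ∈ [0,1]^k. -/
open MeasureTheory Set

namespace HallYatchewAux

lemma restrict_cube (k : ℕ) :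
    (volume : Measure (Fin k → ℝ)).restrict (Icc 0 1)
      = Measure.pi (fun _ : Fin k => (volume : Measure ℝ).restrict (Icc (0:ℝ) 1)) := by
  refine Eq.symm (Measure.pi_eq fun s hs => ?_)
  rw [Measure.restrict_apply (MeasurableSet.univ_pi hs), ← Set.pi_univ_Icc,
      ← Set.pi_inter_distrib, volume_pi_pi]
  simp_rw [Measure.restrict_apply (hs _)]
  simp

lemma cube_prob (k : ℕ) :
    IsProbabilityMeasure ((volume : Measure (Fin k → ℝ)).restrict (Icc 0 1)) := by
  constructor
  rw [Measure.restrict_apply_univ, ← Set.pi_univ_Icc, volume_pi_pi]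
  simp [Real.volume_Icc]

lemma integral_update {k : ℕ} (m : Fin k) (f : (Fin k → ℝ) → ℝ)
    (hf : IntegrableOn f (Icc 0 1) (volume : Measure (Fin k → ℝ))) :
    ∫ w in Icc (0 : Fin k → ℝ) 1, f w
      = ∫ z in Icc (0 : Fin k → ℝ) 1, ∫ t in Icc (0 : ℝ) 1, f (Function.update z m t) := by
  obtain ⟨n, rfl⟩ : ∃ n, k = n + 1 := ⟨k - 1, (Nat.succ_pred_eq_of_pos m.pos).symm⟩
  set μ : Measure ℝ := (volume : Measure ℝ).restrict (Icc 0 1) with hμ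
  haveI : IsProbabilityMeasure μ := ⟨by simp [hμ, Real.volume_Icc]⟩
  set ν : Measure (Fin n → ℝ) := Measure.pi fun _ => μ with hν
  haveI : IsProbabilityMeasure ν := by rw [hν]; infer_instance
  set e := MeasurableEquiv.piFinSuccAbove (fun _ : Fin (n+1) => ℝ) m with he
  have mp : MeasurePreserving e (Measure.pi fun _ : Fin (n+1) => μ) (μ.prod ν) :=
    measurePreserving_piFinSuccAbove (fun _ : Fin (n+1) => μ) m
  have hfPi : Integrable f (Measure.pi fun _ : Fin (n+1) => μ) := by
    rw [← restrict_cube]; exact hf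
  have hfi : Integrable (fun p : ℝ × (Fin n → ℝ) => f (e.symm p)) (μ.prod ν) :=
    ((MeasurePreserving.symm e mp).integrable_comp_emb (MeasurableEquiv.measurableEmbedding _)).2 hfPi
  have hsymm : ∀ p : ℝ × (Fin n → ℝ), e.symm p = m.insertNth p.1 p.2 := by
    intro p; rfl
  set G : (Fin n → ℝ) → ℝ := fun r => ∫ t, f (m.insertNth t r) ∂μ with hG
  have hGint : Integrable G ν := by
    have := hfi.integral_prod_right
    simpa [hsymm] using this
  have RHSval : ∫ w in Icc (0 : Fin (n+1) → ℝ) 1, f w = ∫ r, G r ∂ν := by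
    rw [restrict_cube]
    rw [← (MeasurePreserving.symm e mp).integral_comp (MeasurableEquiv.measurableEmbedding _) f]
    rw [integral_prod_symm _ hfi]
    simp only [hsymm]
    rfl
  have LHSval : (∫ z in Icc (0 : Fin (n+1) → ℝ) 1, ∫ t in Icc (0 : ℝ) 1,
      f (Function.update z m t)) = ∫ r, G r ∂ν := by
    rw [restrict_cube]
    have h1 : ∀ z : Fin (n+1) → ℝ, (∫ t in Icc (0 : ℝ) 1, f (Function.update z m t))
        = G ((e z).2) := by
      intro z
      have : (e z).2 = m.removeNth z := rfl
      rw [this, hG]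
      refine integral_congr_ae (Filter.Eventually.of_forall fun t => ?_)
      simp only []
      rw [Fin.insertNth_removeNth]
    simp_rw [h1]
    rw [mp.integral_comp (MeasurableEquiv.measurableEmbedding _) (fun p => G p.2)]
    have : ∫ p, G p.2 ∂(μ.prod ν) = ∫ r, G r ∂((μ.prod ν).map Prod.snd) := by
      rw [integral_map measurable_snd.aemeasurable]
      rw [Measure.map_snd_prod]
      simpa using hGint.aestronglyMeasurable
    rw [this, Measure.map_snd_prod]
    simp
  rw [RHSval, LHSval]


lemma ftc_sub {g g' : ℝ → ℝ}
    (hg : ∀ t ∈ Icc (0:ℝ) 1, HasDerivWithinAt g (g' t) (Icc 0 1) t)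
    (hgc : ContinuousOn g' (Icc (0:ℝ) 1)) {c : ℝ} (hc : c ∈ Icc (0:ℝ) 1) :
    ∫ t in Icc (0:ℝ) 1, (if t ≤ c then (1:ℝ) else 0) * g' t = g c - g 0 := by
  have h1 : ∫ t in Icc (0:ℝ) 1, (if t ≤ c then (1:ℝ) else 0) * g' t
      = ∫ t in Icc (0:ℝ) 1, (Icc (0:ℝ) c).indicator g' t := by
    refine setIntegral_congr_fun measurableSet_Icc fun t ht => ?_
    by_cases h : t ≤ c
    · rw [if_pos h, one_mul, indicator_of_mem (Set.mem_Icc.2 ⟨ht.1, h⟩)]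
    · rw [if_neg h, zero_mul, indicator_of_notMem (fun hmem => h (Set.mem_Icc.1 hmem).2)]
  rw [h1, setIntegral_indicator measurableSet_Icc]
  have h2 : Icc (0:ℝ) 1 ∩ Icc 0 c = Icc 0 c := by
    rw [Set.Icc_inter_Icc]
    simp [hc.2]
  rw [h2, integral_Icc_eq_integral_Ioc, ← intervalIntegral.integral_of_le hc.1]
  have hgcont : ContinuousOn g (Icc (0:ℝ) 1) := fun t ht =>
    (hg t ht).continuousWithinAt
  refine intervalIntegral.integral_eq_sub_of_hasDeriv_right_of_le hc.1
    (hgcont.mono (Icc_subset_Icc le_rfl hc.2)) (fun t ht => ?_)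
    ((hgc.mono ?_).intervalIntegrable)
  · have ht1 : t ∈ Icc (0:ℝ) 1 := ⟨ht.1.le, ht.2.le.trans hc.2⟩
    have hmem : Icc (0:ℝ) 1 ∈ nhds t := by
      refine Icc_mem_nhds ht.1 (lt_of_lt_of_le ht.2 hc.2)
    exact ((hg t ht1).hasDerivAt hmem).hasDerivWithinAt
  · rw [uIcc_of_le hc.1]
    exact Icc_subset_Icc le_rfl hc.2


lemma cube_volume (k : ℕ) : (volume : Measure (Fin k → ℝ)) (Icc 0 1) = 1 := by
  rw [← Set.pi_univ_Icc, volume_pi_pi]; simp [Real.volume_Icc]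

lemma integrableOn_cube {k : ℕ} {f : (Fin k → ℝ) → ℝ}
    (hm : AEStronglyMeasurable f ((volume : Measure (Fin k → ℝ)).restrict (Icc 0 1)))
    (hb : ∃ C, ∀ w ∈ Icc (0 : Fin k → ℝ) 1, ‖f w‖ ≤ C) :
    IntegrableOn f (Icc 0 1) (volume : Measure (Fin k → ℝ)) := by
  obtain ⟨C, hC⟩ := hb
  haveI : IsFiniteMeasure ((volume : Measure (Fin k → ℝ)).restrict (Icc 0 1)) := by
    constructor
    rw [Measure.restrict_apply_univ, cube_volume]
    exact ENNReal.one_lt_top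
  refine Integrable.mono' (integrable_const C) hm ?_
  rw [ae_restrict_iff' measurableSet_Icc]
  exact Filter.Eventually.of_forall hC

variable {k : ℕ}

lemma mix_mem {J : ℕ} {y w : Fin k → ℝ} (hy : y ∈ Icc (0 : Fin k → ℝ) 1)
    (hw : w ∈ Icc (0 : Fin k → ℝ) 1) :
    (fun i : Fin k => if (i : ℕ) < J then w i else y i) ∈ Icc (0 : Fin k → ℝ) 1 := by
  constructor <;> intro i <;> by_cases h : (i : ℕ) < J <;>
    simp only [h, if_true, if_false, Pi.zero_apply, Pi.one_apply]
  exacts [hw.1 i, hy.1 i, hw.2 i, hy.2 i]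

lemma prodind_bound {S : Finset (Fin k)} {w c : Fin k → ℝ} :
    ‖∏ i ∈ S, if w i ≤ c i then (1:ℝ) else 0‖ ≤ 1 := by
  have h0 : (0:ℝ) ≤ ∏ i ∈ S, if w i ≤ c i then (1:ℝ) else 0 :=
    Finset.prod_nonneg fun i _ => by split <;> norm_num
  have h1 : (∏ i ∈ S, if w i ≤ c i then (1:ℝ) else 0) ≤ 1 :=
    Finset.prod_le_one (fun i _ => by split <;> norm_num)
      (fun i _ => by split <;> norm_num)
  rw [Real.norm_eq_abs, abs_of_nonneg h0]; exact h1

lemma prodind_meas (S : Finset (Fin k)) (c : Fin k → ℝ) :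
    Measurable (fun w : Fin k → ℝ => ∏ i ∈ S, if w i ≤ c i then (1:ℝ) else 0) :=
  Finset.measurable_prod _ fun i _ =>
    Measurable.ite (measurableSet_le (measurable_pi_apply i) measurable_const)
      measurable_const measurable_const

lemma mixmap_cont (J : ℕ) (y : Fin k → ℝ) :
    Continuous (fun w : Fin k → ℝ => fun i : Fin k => if (i : ℕ) < J then w i else y i) := by
  refine continuous_pi fun i => ?_
  by_cases h : (i : ℕ) < J
  · simpa [h] using continuous_apply i
  · simpa [h] using (continuous_const : Continuous fun _ : Fin k → ℝ => y i)

lemma integrand_int {D : ℕ → (Fin k → ℝ) → ℝ}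
    (hcont : ∀ j : ℕ, j ≤ k → ContinuousOn (D j) (Icc (0 : Fin k → ℝ) 1))
    (S : Finset (Fin k)) {J : ℕ} (hJ : J ≤ k) {y : Fin k → ℝ}
    (hy : y ∈ Icc (0 : Fin k → ℝ) 1) (c : Fin k → ℝ) :
    IntegrableOn (fun w : Fin k → ℝ =>
      (∏ i ∈ S, if w i ≤ c i then (1:ℝ) else 0) *
        D J (fun i => if (i : ℕ) < J then w i else y i)) (Icc 0 1) volume := by
  obtain ⟨C, hC⟩ := isCompact_Icc.exists_bound_of_continuousOn (hcont J hJ)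
  refine integrableOn_cube (AEStronglyMeasurable.mul
    (prodind_meas S c).aestronglyMeasurable ?_) ⟨C, fun w hw => ?_⟩
  · exact ((hcont J hJ).comp (mixmap_cont J y).continuousOn
      (fun w hw => mix_mem hy hw)).aestronglyMeasurable measurableSet_Icc
  · rw [norm_mul]
    calc ‖∏ i ∈ S, if w i ≤ c i then (1:ℝ) else 0‖ *
          ‖D J (fun i => if (i : ℕ) < J then w i else y i)‖
        ≤ 1 * C := mul_le_mul prodind_bound (hC _ (mix_mem hy hw)) (norm_nonneg _)
          zero_le_one
      _ = C := one_mul C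


lemma key (k : ℕ)
    (b : (Fin k → ℝ) → ℝ) (D : ℕ → (Fin k → ℝ) → ℝ) (hD0 : D 0 = b)
    (hderiv : ∀ j : Fin k, ∀ x ∈ Icc (0 : Fin k → ℝ) 1,
      HasDerivWithinAt (fun t => D (j : ℕ) (Function.update x j t))
        (D ((j : ℕ) + 1) x) (Icc 0 1) (x j))
    (hcont : ∀ j : ℕ, j ≤ k → ContinuousOn (D j) (Icc (0 : Fin k → ℝ) 1)) :
    ∀ j, j ≤ k → ∀ y ∈ Icc (0 : Fin k → ℝ) 1,
      (∫ w in Icc (0 : Fin k → ℝ) 1,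
        (∏ i ∈ Finset.univ.filter fun i : Fin k => (i : ℕ) < j,
          if w i ≤ y i then (1:ℝ) else 0) * D j (fun i => if (i : ℕ) < j then w i else y i))
      = ∑ s ∈ (Finset.univ.filter fun i : Fin k => (i : ℕ) < j).powerset,
          (-1:ℝ) ^ s.card * b (fun i => if i ∈ s then 0 else y i) := by
  intro j
  induction j with
  | zero =>
    intro _ y hy
    simp only [Nat.not_lt_zero, Finset.filter_false, Finset.prod_empty, one_mul,
      if_false, Finset.powerset_empty, Finset.sum_singleton, Finset.card_empty,
      pow_zero, Finset.notMem_empty]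
    rw [setIntegral_const]
    rw [measureReal_def, cube_volume]
    simp [hD0]
  | succ j ih =>
    intro hjk y hy
    have hjk' : j ≤ k := Nat.le_of_succ_le hjk
    have hj : j < k := hjk
    set m : Fin k := ⟨j, hj⟩ with hm
    have hne : ∀ i : Fin k, (i : ℕ) < j → i ≠ m := by
      intro i hi hEq; rw [hEq] at hi; exact absurd hi (lt_irrefl j)
    have hfm : m ∉ Finset.univ.filter fun i : Fin k => (i : ℕ) < j := by
      simp [hm]
    have hfilter : (Finset.univ.filter fun i : Fin k => (i : ℕ) < j + 1)
        = insert m (Finset.univ.filter fun i : Fin k => (i : ℕ) < j) := by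
      ext i
      simp only [Finset.mem_filter, Finset.mem_univ, true_and, Finset.mem_insert]
      rw [Nat.lt_succ_iff_lt_or_eq, or_comm, Fin.ext_iff]
    -- notation
    set q : (Fin k → ℝ) → (Fin k → ℝ) :=
      fun z => fun i => if (i : ℕ) < j then z i else y i with hq
    set P : (Fin k → ℝ) → ℝ :=
      fun z => ∏ i ∈ Finset.univ.filter fun i : Fin k => (i : ℕ) < j,
        if z i ≤ y i then (1:ℝ) else 0 with hP
    set F : (Fin k → ℝ) → ℝ := fun w =>
      (∏ i ∈ Finset.univ.filter fun i : Fin k => (i : ℕ) < j + 1,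
        if w i ≤ y i then (1:ℝ) else 0) *
        D (j+1) (fun i => if (i : ℕ) < j + 1 then w i else y i) with hF
    have hFint : IntegrableOn F (Icc 0 1) volume := integrand_int hcont _ hjk hy y
    -- rewrite F (update z m t)
    have hFupd : ∀ (z : Fin k → ℝ) (t : ℝ),
        F (Function.update z m t)
          = P z * ((if t ≤ y m then (1:ℝ) else 0) *
              D (j+1) (Function.update (q z) m t)) := by
      intro z t
      have harg : (fun i : Fin k => if (i : ℕ) < j + 1 then Function.update z m t i else y i)
          = Function.update (q z) m t := by
        funext i
        by_cases him : i = m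
        · subst him
          simp [Function.update_self, Nat.lt_succ_iff, hm]
        · rw [Function.update_of_ne him, Function.update_of_ne him, hq]
          have : ((i : ℕ) < j + 1) ↔ ((i : ℕ) < j) := by
            rw [Nat.lt_succ_iff_lt_or_eq]
            refine ⟨fun h => h.resolve_right fun h' => him (Fin.ext h'), Or.inl⟩
          simp only [this]
      have hprod : (∏ i ∈ Finset.univ.filter fun i : Fin k => (i : ℕ) < j,
          if Function.update z m t i ≤ y i then (1:ℝ) else 0) = P z := by
        refine Finset.prod_congr rfl fun i hi => ?_
        rw [Function.update_of_ne (hne i (by simpa using hi))]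
      rw [hF]
      simp only [hfilter, Finset.prod_insert hfm, Function.update_self, harg, hprod]
      ring
    rw [integral_update m F hFint]
    -- inner integral via FTC
    have hinner : ∀ z ∈ Icc (0 : Fin k → ℝ) 1,
        (∫ t in Icc (0:ℝ) 1, F (Function.update z m t))
          = P z * (D j (q z) - D j (Function.update (q z) m 0)) := by
      intro z hz
      have hqz : q z ∈ Icc (0 : Fin k → ℝ) 1 := mix_mem hy hz
      have hupdmem : ∀ t ∈ Icc (0:ℝ) 1, Function.update (q z) m t ∈ Icc (0 : Fin k → ℝ) 1 := by
        intro t ht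
        constructor <;> intro i <;> by_cases him : i = m
        · subst him; simpa [Function.update_self] using ht.1
        · simpa [Function.update_of_ne him] using hqz.1 i
        · subst him; simpa [Function.update_self] using ht.2
        · simpa [Function.update_of_ne him] using hqz.2 i
      have hucont : Continuous (fun t : ℝ => Function.update (q z) m t) := by
        refine continuous_pi fun i => ?_
        simp only [Function.update_apply]
        by_cases him : i = m
        · simpa [him] using continuous_id'
        · simpa [him] using (continuous_const : Continuous fun _ : ℝ => q z i)
      have hg : ∀ t ∈ Icc (0:ℝ) 1,
          HasDerivWithinAt (fun s => D j (Function.update (q z) m s))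
            (D (j+1) (Function.update (q z) m t)) (Icc 0 1) t := by
        intro t ht
        have h := hderiv m (Function.update (q z) m t) (hupdmem t ht)
        simp only [Function.update_idem, Function.update_self] at h
        exact h
      have hgc : ContinuousOn (fun t : ℝ => D (j+1) (Function.update (q z) m t))
          (Icc (0:ℝ) 1) :=
        (hcont (j+1) hjk).comp hucont.continuousOn (fun t ht => hupdmem t ht)
      have hym : y m ∈ Icc (0:ℝ) 1 := ⟨hy.1 m, hy.2 m⟩
      have hftc := ftc_sub hg hgc hym
      have hqm : Function.update (q z) m (y m) = q z := by
        have : q z m = y m := by simp [hq, hm]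
        rw [← this, Function.update_eq_self]
      rw [hqm] at hftc
      simp only [hFupd]
      rw [integral_const_mul, hftc]
    rw [setIntegral_congr_fun measurableSet_Icc hinner]
    -- split the integral
    have hsplit : ∀ z : Fin k → ℝ,
        P z * (D j (q z) - D j (Function.update (q z) m 0))
          = P z * D j (q z) - P z * D j (Function.update (q z) m 0) := fun z =>
      mul_sub _ _ _
    simp only [hsplit]
    set y' : Fin k → ℝ := Function.update y m 0 with hy'
    have hy'mem : y' ∈ Icc (0 : Fin k → ℝ) 1 := by
      constructor <;> intro i <;> by_cases him : i = m
      · subst him; simp [hy', Function.update_self]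
      · simpa [hy', Function.update_of_ne him] using hy.1 i
      · subst him; simp [hy', Function.update_self]
      · simpa [hy', Function.update_of_ne him] using hy.2 i
    have hsecond : ∀ z : Fin k → ℝ,
        P z * D j (Function.update (q z) m 0)
          = (∏ i ∈ Finset.univ.filter fun i : Fin k => (i : ℕ) < j,
              if z i ≤ y' i then (1:ℝ) else 0) *
            D j (fun i => if (i : ℕ) < j then z i else y' i) := by
      intro z
      have h1 : P z = ∏ i ∈ Finset.univ.filter fun i : Fin k => (i : ℕ) < j,
          if z i ≤ y' i then (1:ℝ) else 0 := by
        refine Finset.prod_congr rfl fun i hi => ?_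
        rw [hy', Function.update_of_ne (hne i (by simpa using hi))]
      have h2 : Function.update (q z) m 0
          = fun i : Fin k => if (i : ℕ) < j then z i else y' i := by
        funext i
        by_cases him : i = m
        · subst him
          simp [Function.update_self, hy', hm]
        · rw [Function.update_of_ne him, hy', Function.update_of_ne him, hq]
      rw [h1, h2]
    have hint1 : IntegrableOn (fun z => P z * D j (q z)) (Icc 0 1) volume :=
      integrand_int hcont _ hjk' hy y
    have hint2 : IntegrableOn (fun z => P z * D j (Function.update (q z) m 0))
        (Icc 0 1) volume := by
      have := integrand_int (D := D) hcont
        (Finset.univ.filter fun i : Fin k => (i : ℕ) < j) hjk' hy'mem y'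
      refine this.congr_fun (fun z _ => ?_) measurableSet_Icc
      exact (hsecond z).symm
    rw [integral_sub hint1 hint2]
    have e2 : (∫ z in Icc (0 : Fin k → ℝ) 1, P z * D j (Function.update (q z) m 0))
        = ∑ s ∈ (Finset.univ.filter fun i : Fin k => (i : ℕ) < j).powerset,
            (-1:ℝ) ^ s.card * b (fun i => if i ∈ s then 0 else y' i) := by
      rw [← ih hjk' y' hy'mem]
      refine setIntegral_congr_fun measurableSet_Icc fun z _ => hsecond z
    rw [ih hjk' y hy, e2]
    -- combinatorics
    rw [hfilter, Finset.sum_powerset_insert hfm]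
    have hterm : ∀ s ∈ (Finset.univ.filter fun i : Fin k => (i : ℕ) < j).powerset,
        (-1:ℝ) ^ (insert m s).card * b (fun i => if i ∈ insert m s then 0 else y i)
          = -((-1:ℝ) ^ s.card * b (fun i => if i ∈ s then 0 else y' i)) := by
      intro s hs
      have hms : m ∉ s := fun hmem =>
        hfm (Finset.mem_powerset.1 hs hmem)
      have hcard : (insert m s).card = s.card + 1 := Finset.card_insert_of_notMem hms
      have hb2 : (fun i : Fin k => if i ∈ insert m s then (0:ℝ) else y i)
          = fun i : Fin k => if i ∈ s then 0 else y' i := by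
        funext i
        by_cases him : i = m
        · subst him
          simp [hms, hy', Function.update_self]
        · have : i ∈ insert m s ↔ i ∈ s := by
            simp [Finset.mem_insert, him]
          simp only [this, hy', Function.update_of_ne him]
      rw [hcard, hb2, pow_succ]
      ring
    rw [Finset.sum_congr rfl hterm, Finset.sum_neg_distrib]
    ring


lemma sign_prod (β : Fin k → Bool) :
    (-1:ℝ) ^ (Finset.univ.filter fun i => β i = true).card
      = ∏ i : Fin k, (if β i = true then (-1:ℝ) else 1) := by
  rw [Finset.prod_ite, Finset.prod_const, Finset.prod_const, one_pow, mul_one]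

lemma sign_flip (β : Fin k → Bool) (i0 : Fin k) :
    (-1:ℝ) ^ (Finset.univ.filter fun i => Function.update β i0 (!β i0) i = true).card
      = -(-1:ℝ) ^ (Finset.univ.filter fun i => β i = true).card := by
  rw [sign_prod, sign_prod,
    ← Finset.mul_prod_erase Finset.univ _ (Finset.mem_univ i0),
    ← Finset.mul_prod_erase Finset.univ
      (fun i => if β i = true then (-1:ℝ) else 1) (Finset.mem_univ i0)]
  have h1 : ∏ i ∈ Finset.univ.erase i0,
      (if Function.update β i0 (!β i0) i = true then (-1:ℝ) else 1)
      = ∏ i ∈ Finset.univ.erase i0, (if β i = true then (-1:ℝ) else 1) :=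
    Finset.prod_congr rfl fun i hi => by
      rw [Function.update_of_ne (Finset.ne_of_mem_erase hi)]
  rw [h1, Function.update_self]
  cases hb : β i0 <;> simp

-- the key in final form
lemma key' (k : ℕ)
    (b : (Fin k → ℝ) → ℝ) (D : ℕ → (Fin k → ℝ) → ℝ) (hD0 : D 0 = b)
    (hderiv : ∀ j : Fin k, ∀ x ∈ Icc (0 : Fin k → ℝ) 1,
      HasDerivWithinAt (fun t => D (j : ℕ) (Function.update x j t))
        (D ((j : ℕ) + 1) x) (Icc 0 1) (x j))
    (hcont : ∀ j : ℕ, j ≤ k → ContinuousOn (D j) (Icc (0 : Fin k → ℝ) 1)) :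
    ∀ y ∈ Icc (0 : Fin k → ℝ) 1,
      (∫ w in Icc (0 : Fin k → ℝ) 1,
        (∏ i : Fin k, if w i ≤ y i then (1:ℝ) else 0) * D k w)
      = ∑ γ : Fin k → Bool,
          (-1:ℝ) ^ (Finset.univ.filter fun i => γ i = true).card *
            b (fun i => if γ i then 0 else y i) := by
  intro y hy
  have h := key k b D hD0 hderiv hcont k le_rfl y hy
  have hfilt : (Finset.univ.filter fun i : Fin k => (i : ℕ) < k) = Finset.univ := by
    refine Finset.filter_true_of_mem fun i _ => i.isLt
  rw [hfilt] at h
  have harg : ∀ w : Fin k → ℝ,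
      (fun i : Fin k => if (i : ℕ) < k then w i else y i) = w := by
    intro w; funext i; simp [i.isLt]
  simp only [harg] at h
  rw [h, Finset.powerset_univ]
  -- convert sum over Finsets to sum over Bool functions
  refine Finset.sum_nbij' (fun s => fun i => decide (i ∈ s))
    (fun γ => Finset.univ.filter fun i => γ i = true) ?_ ?_ ?_ ?_ ?_
  · intro s _; exact Finset.mem_univ _
  · intro γ _; exact Finset.mem_univ _
  · intro s _
    ext i; simp
  · intro γ _
    funext i; simp
  · intro s _
    have h1 : (Finset.univ.filter fun i => (decide (i ∈ s)) = true) = s := by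
      ext i; simp
    rw [h1]
    have h2 : (fun i : Fin k => if decide (i ∈ s) = true then (0:ℝ) else y i)
        = fun i : Fin k => if i ∈ s then (0:ℝ) else y i := by
      funext i; simp
    rw [h2]


end HallYatchewAux

open HallYatchewAux in
/-- Identity (A.2) of Hall–Yatchew with `α = (1,…,1)`:
`∑_{β} (−1)^{|β|} (M_β N b)(x) = ∑_{β} (−1)^{|β|} (M_β b)(x)`.
Here `D j` is the mixed partial of `b` in the first `j` coordinates
(so `D k = b^{(1,…,1)}`), `(N b)(y) = ∫₀^{y₁}⋯∫₀^{y_k} b^{(1,…,1)}(w) dw`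
is written as a cube integral against indicators, and `M_β` is realized as
integration over the unit cube in the coordinates with `β_i = 1`. -/
theorem identity_A2 (k : ℕ)
    (b : (Fin k → ℝ) → ℝ) (D : ℕ → (Fin k → ℝ) → ℝ) (hD0 : D 0 = b)
    (hderiv : ∀ j : Fin k, ∀ x ∈ Icc (0 : Fin k → ℝ) 1,
      HasDerivWithinAt (fun t => D (j : ℕ) (Function.update x j t))
        (D ((j : ℕ) + 1) x) (Icc 0 1) (x j))
    (hcont : ∀ j : ℕ, j ≤ k → ContinuousOn (D j) (Icc (0 : Fin k → ℝ) 1))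
    (x : Fin k → ℝ) (hx : x ∈ Icc (0 : Fin k → ℝ) 1) :
    ∑ β : Fin k → Bool,
      (-1 : ℝ) ^ (Finset.univ.filter fun i => β i = true).card *
        ∫ u in Icc (0 : Fin k → ℝ) 1,
          (∫ w in Icc (0 : Fin k → ℝ) 1,
            (∏ i : Fin k,
              if w i ≤ (if β i then u i else x i) then (1:ℝ) else 0) * D k w)
      = ∑ β : Fin k → Bool,
          (-1 : ℝ) ^ (Finset.univ.filter fun i => β i = true).card *
            ∫ u in Icc (0 : Fin k → ℝ) 1,
              b (fun i => if β i then u i else x i) := by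
  have hbc : ContinuousOn b (Icc (0 : Fin k → ℝ) 1) := hD0 ▸ hcont 0 (Nat.zero_le k)
  obtain ⟨C, hC⟩ := isCompact_Icc.exists_bound_of_continuousOn hbc
  -- integrability of the mixed-argument compositions
  have hmix : ∀ β γ : Fin k → Bool,
      IntegrableOn (fun u : Fin k → ℝ =>
        b (fun i => if γ i then 0 else if β i then u i else x i)) (Icc 0 1) volume := by
    intro β γ
    have hφ : Continuous (fun u : Fin k → ℝ =>
        fun i : Fin k => if γ i then (0:ℝ) else if β i then u i else x i) := by
      refine continuous_pi fun i => ?_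
      by_cases h1 : γ i
      · simpa [h1] using (continuous_const : Continuous fun _ : Fin k → ℝ => (0:ℝ))
      · by_cases h2 : β i
        · simpa [h1, h2] using continuous_apply i
        · simpa [h1, h2] using (continuous_const : Continuous fun _ : Fin k → ℝ => x i)
    have hmaps : MapsTo (fun u : Fin k → ℝ =>
        fun i : Fin k => if γ i then (0:ℝ) else if β i then u i else x i)
        (Icc 0 1) (Icc 0 1) := by
      intro u hu
      constructor <;> intro i <;> by_cases h1 : γ i <;> by_cases h2 : β i <;>
        simp only [h1, h2, if_true, if_false, Pi.zero_apply, Pi.one_apply]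
      exacts [le_rfl, le_rfl, hu.1 i, hx.1 i, zero_le_one, zero_le_one, hu.2 i, hx.2 i]
    refine integrableOn_cube ((hbc.comp hφ.continuousOn hmaps).aestronglyMeasurable
      measurableSet_Icc) ⟨C, fun u hu => hC _ (hmaps hu)⟩
  have hmixmem : ∀ (β : Fin k → Bool) (u : Fin k → ℝ), u ∈ Icc (0 : Fin k → ℝ) 1 →
      (fun i : Fin k => if β i then u i else x i) ∈ Icc (0 : Fin k → ℝ) 1 := by
    intro β u hu
    constructor <;> intro i <;> by_cases h2 : β i <;>
      simp only [h2, if_true, if_false, Pi.zero_apply, Pi.one_apply]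
    exacts [hu.1 i, hx.1 i, hu.2 i, hx.2 i]
  have hk' := key' k b D hD0 hderiv hcont
  -- rewrite LHS inner integrals
  have hLHS : ∀ β : Fin k → Bool,
      (∫ u in Icc (0 : Fin k → ℝ) 1,
        (∫ w in Icc (0 : Fin k → ℝ) 1,
          (∏ i : Fin k,
            if w i ≤ (if β i then u i else x i) then (1:ℝ) else 0) * D k w))
      = ∑ γ : Fin k → Bool,
          (-1:ℝ) ^ (Finset.univ.filter fun i => γ i = true).card *
            ∫ u in Icc (0 : Fin k → ℝ) 1,
              b (fun i => if γ i then 0 else if β i then u i else x i) := by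
    intro β
    rw [setIntegral_congr_fun measurableSet_Icc
      (fun u hu => hk' (fun i => if β i then u i else x i) (hmixmem β u hu))]
    rw [integral_finset_sum _ (fun γ _ => ((hmix β γ).const_mul _))]
    exact Finset.sum_congr rfl fun γ _ => integral_const_mul _ _
  simp only [hLHS]
  -- pure algebra: swap sums and cancel
  simp only [Finset.mul_sum]
  rw [Finset.sum_comm]
  rw [Finset.sum_eq_single (fun _ : Fin k => false)]
  · refine Finset.sum_congr rfl fun β _ => ?_
    simp
  · intro γ _ hγ
    obtain ⟨i0, hi0⟩ : ∃ i, γ i = true := by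
      by_contra hcon; push_neg at hcon
      exact hγ (funext fun i => by simpa using hcon i)
    refine Finset.sum_involution (fun β _ => Function.update β i0 (!β i0)) ?_ ?_
      (fun β _ => Finset.mem_univ _) ?_
    · intro β _
      have hJ : (∫ u in Icc (0 : Fin k → ℝ) 1,
            b (fun i => if γ i then 0 else if Function.update β i0 (!β i0) i then u i else x i))
          = ∫ u in Icc (0 : Fin k → ℝ) 1,
            b (fun i => if γ i then 0 else if β i then u i else x i) := by
        congr 1
        funext u
        congr 1
        funext i
        by_cases him : i = i0
        · subst him; simp [hi0]
        · rw [Function.update_of_ne him]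
      rw [sign_flip, hJ]
      ring
    · intro β _ hne hEq
      have h := congrFun hEq i0
      simp only [Function.update_self] at h
      exact absurd h (by cases β i0 <;> simp)
    · intro β _
      simp only [Function.update_self, Bool.not_not, Function.update_idem]
      exact Function.update_eq_self i0 β
  · intro h
    exact absurd (Finset.mem_univ _) h
end

section
/- Let g : [0,1]^k → ℝ have continuous mixed partial g^{(1,…,1)}. Then g(x) = ∑_{β ∈ {0,1}^k} (−1)^{|β|} (M_β N g)(x) − ∑_{β ∈ {0,1}^k, β ≠ 0} (−1)^{|β|} (M_β g)(x) for all x ∈ [0,1]^k, where (N g)(x) = ∫₀^{x₁}⋯∫₀^{x_k} g^{(1,…,1)}(u) du and M_β averages over coordinates i with β_i = 1. -/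
open MeasureTheory Set

lemma restrict_cube (k : ℕ) :
    (volume : Measure (Fin k → ℝ)).restrict (Icc 0 1)
      = Measure.pi (fun _ : Fin k => (volume : Measure ℝ).restrict (Icc 0 1)) := by
  refine Measure.pi_eq (fun s hs => ?_) |>.symm
  rw [Measure.restrict_apply (MeasurableSet.univ_pi hs), ← Set.pi_univ_Icc,
    ← Set.pi_inter_distrib, volume_pi_pi]
  simp_rw [Measure.restrict_apply (hs _)]
  rfl

instance : IsProbabilityMeasure ((volume : Measure ℝ).restrict (Icc 0 1)) := by
  constructor
  rw [Measure.restrict_apply_univ, Real.volume_Icc]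
  norm_num

lemma peel {k : ℕ} (j : Fin k) (f : (Fin k → ℝ) → ℝ)
    (hf : IntegrableOn f (Icc 0 1)) :
    ∫ w in Icc (0:Fin k→ℝ) 1, f w
      = ∫ w in Icc (0:Fin k→ℝ) 1, ∫ t in Icc (0:ℝ) 1, f (Function.update w j t) := by
  obtain ⟨n, rfl⟩ : ∃ n, k = n + 1 := ⟨k - 1, (Nat.succ_pred_eq_of_pos j.pos).symm⟩
  set μ1 := (volume : Measure ℝ).restrict (Icc 0 1) with hμ1
  set μ := Measure.pi (fun _ : Fin (n+1) => μ1) with hμ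
  set μ' := Measure.pi (fun _ : Fin n => μ1) with hμ'
  have hres : (volume : Measure (Fin (n+1) → ℝ)).restrict (Icc 0 1) = μ := restrict_cube _
  have hmp : MeasurePreserving (MeasurableEquiv.piFinSuccAbove (fun _ => ℝ) j) μ (μ1.prod μ') :=
    MeasureTheory.measurePreserving_piFinSuccAbove (fun _ => μ1) j
  have hmps : MeasurePreserving ((MeasurableEquiv.piFinSuccAbove (fun _ : Fin (n+1) => ℝ) j).symm)
      (μ1.prod μ') μ :=
    MeasurePreserving.symm _ hmp
  have hfi : Integrable f μ := by rwa [← hres]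
  have hsymm : ∀ (t : ℝ) (v : Fin n → ℝ),
      (MeasurableEquiv.piFinSuccAbove (fun _ => ℝ) j).symm (t, v) = j.insertNth t v := by
    intro t v; rfl
  have hF : Integrable (fun z : ℝ × (Fin n → ℝ) => f (j.insertNth z.1 z.2)) (μ1.prod μ') := by
    have := (hmps.integrable_comp_emb (MeasurableEquiv.measurableEmbedding _)).2 hfi
    exact this
  calc ∫ w in Icc (0:Fin (n+1)→ℝ) 1, f w = ∫ w, f w ∂μ := by rw [hres]
    _ = ∫ z : ℝ × (Fin n → ℝ), f (j.insertNth z.1 z.2) ∂(μ1.prod μ') := by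
        rw [← hmps.integral_comp']
        rfl
    _ = ∫ z : (Fin n → ℝ) × ℝ, f (j.insertNth z.2 z.1) ∂(μ'.prod μ1) := by
        rw [← integral_prod_swap (fun z : ℝ × (Fin n → ℝ) => f (j.insertNth z.1 z.2))]
        rfl
    _ = ∫ v, (∫ t, f (j.insertNth t v) ∂μ1) ∂μ' := integral_prod _ hF.swap
    _ = ∫ z : ℝ × (Fin n → ℝ), (∫ t, f (j.insertNth t z.2) ∂μ1) ∂(μ1.prod μ') := by
        rw [integral_fun_snd (fun v => ∫ t, f (j.insertNth t v) ∂μ1)]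
        simp
    _ = ∫ w, (∫ t, f (Function.update w j t) ∂μ1) ∂μ := by
        rw [← hmp.integral_comp']
        congr 1; ext w
        congr 1; ext t
        congr 1
        show j.insertNth t (j.removeNth w) = _
        exact Fin.insertNth_removeNth j t w
    _ = _ := by rw [hres]

lemma mem_cube_update {k : ℕ} {z : Fin k → ℝ} (hz : z ∈ Icc (0:Fin k → ℝ) 1)
    (j : Fin k) {t : ℝ} (ht : t ∈ Icc (0:ℝ) 1) :
    Function.update z j t ∈ Icc (0:Fin k → ℝ) 1 := by
  constructor <;> intro i <;> rcases eq_or_ne i j with h | h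
  · subst h; simpa using ht.1
  · simpa [Function.update_of_ne h] using hz.1 i
  · subst h; simpa using ht.2
  · simpa [Function.update_of_ne h] using hz.2 i

lemma ftc_coord {k : ℕ} (D : ℕ → (Fin k → ℝ) → ℝ)
    (hderiv : ∀ j : Fin k, ∀ x ∈ Icc (0 : Fin k → ℝ) 1,
      HasDerivWithinAt (fun t => D (j : ℕ) (Function.update x j t))
        (D ((j : ℕ) + 1) x) (Icc 0 1) (x j))
    (hcont : ∀ j : ℕ, j ≤ k → ContinuousOn (D j) (Icc (0 : Fin k → ℝ) 1))
    (j : Fin k) (z : Fin k → ℝ) (hz : z ∈ Icc (0:Fin k → ℝ) 1)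
    (y : ℝ) (hy : y ∈ Icc (0:ℝ) 1) :
    ∫ t in Icc (0:ℝ) 1, (if t ≤ y then (1:ℝ) else 0) * D ((j:ℕ)+1) (Function.update z j t)
      = D j (Function.update z j y) - D j (Function.update z j 0) := by
  have hupd : Continuous (fun t : ℝ => Function.update z j t) := by
    refine continuous_pi fun i => ?_
    rcases eq_or_ne i j with rfl | h
    · simpa using continuous_id'
    · simpa [Function.update_of_ne h] using continuous_const
  have hcont' : ContinuousOn (fun t : ℝ => D (j:ℕ) (Function.update z j t)) (Icc 0 1) := by
    refine (hcont j (le_of_lt j.isLt)).comp hupd.continuousOn ?_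
    intro t ht; exact mem_cube_update hz j ht
  have hcont'' : ContinuousOn (fun t : ℝ => D ((j:ℕ)+1) (Function.update z j t)) (Icc 0 1) := by
    refine (hcont ((j:ℕ)+1) j.isLt).comp hupd.continuousOn ?_
    intro t ht; exact mem_cube_update hz j ht
  calc ∫ t in Icc (0:ℝ) 1, (if t ≤ y then (1:ℝ) else 0) * D ((j:ℕ)+1) (Function.update z j t)
      = ∫ t in Icc (0:ℝ) 1,
          (Iic y).indicator (fun t => D ((j:ℕ)+1) (Function.update z j t)) t := by
        refine setIntegral_congr_fun measurableSet_Icc (fun t _ => ?_)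
        by_cases h : t ≤ y <;> simp [Set.indicator_apply, h]
    _ = ∫ t in Icc (0:ℝ) 1 ∩ Iic y, D ((j:ℕ)+1) (Function.update z j t) :=
        setIntegral_indicator measurableSet_Iic
    _ = ∫ t in Icc (0:ℝ) y, D ((j:ℕ)+1) (Function.update z j t) := by
        have hset : Icc (0:ℝ) 1 ∩ Iic y = Icc 0 y := by
          ext t
          simp only [mem_inter_iff, mem_Icc, mem_Iic]
          exact ⟨fun h => ⟨h.1.1, h.2⟩, fun h => ⟨⟨h.1, h.2.trans hy.2⟩, h.2⟩⟩
        rw [hset]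
    _ = ∫ t in (0:ℝ)..y, D ((j:ℕ)+1) (Function.update z j t) := by
        rw [intervalIntegral.integral_of_le hy.1, integral_Icc_eq_integral_Ioc]
    _ = D j (Function.update z j y) - D j (Function.update z j 0) := by
        refine intervalIntegral.integral_eq_sub_of_hasDeriv_right_of_le hy.1
          (hcont'.mono (Icc_subset_Icc le_rfl hy.2)) (fun t ht => ?_) ?_
        · have hm : Function.update z j t ∈ Icc (0:Fin k → ℝ) 1 :=
            mem_cube_update hz j ⟨le_of_lt ht.1, le_of_lt (lt_of_lt_of_le ht.2 hy.2)⟩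
          have H := hderiv j _ hm
          simp only [Function.update_idem, Function.update_self] at H
          have : HasDerivAt (fun t : ℝ => D (j:ℕ) (Function.update z j t))
              (D ((j:ℕ)+1) (Function.update z j t)) t := by
            exact H.hasDerivAt (Icc_mem_nhds ht.1 (lt_of_lt_of_le ht.2 hy.2))
          exact this.hasDerivWithinAt
        · exact (hcont''.mono (Icc_subset_Icc le_rfl hy.2)).intervalIntegrable_of_Icc hy.1

lemma proj_continuous {k : ℕ} (j : ℕ) (y : Fin k → ℝ) :
    Continuous (fun w : Fin k → ℝ => (fun i : Fin k => if (i:ℕ) < j then w i else y i)) := by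
  refine continuous_pi fun i => ?_
  by_cases h : (i:ℕ) < j
  · simpa [h] using continuous_apply i
  · simpa [h] using continuous_const

lemma proj_mem_cube {k : ℕ} (j : ℕ) {y w : Fin k → ℝ} (hy : y ∈ Icc (0:Fin k → ℝ) 1)
    (hw : w ∈ Icc (0:Fin k → ℝ) 1) :
    (fun i : Fin k => if (i:ℕ) < j then w i else y i) ∈ Icc (0:Fin k → ℝ) 1 := by
  constructor <;> intro i <;> by_cases h : (i:ℕ) < j <;>
    simp only [Pi.zero_apply, Pi.one_apply, h, if_true, if_false]
  · exact hw.1 i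
  · exact hy.1 i
  · exact hw.2 i
  · exact hy.2 i

lemma ind_measurable {k : ℕ} (j : ℕ) (y : Fin k → ℝ) :
    Measurable (fun w : Fin k → ℝ =>
      ∏ i : Fin k, if (i:ℕ) < j then (if w i ≤ y i then (1:ℝ) else 0) else 1) := by
  refine Finset.measurable_prod _ fun i _ => ?_
  by_cases h : (i:ℕ) < j
  · simp only [h, if_true]
    exact Measurable.ite (measurableSet_le (measurable_pi_apply i) measurable_const)
      measurable_const measurable_const
  · simp only [h, if_false]; exact measurable_const

lemma integrand_integrable {k : ℕ} (D : ℕ → (Fin k → ℝ) → ℝ)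
    (hcont : ∀ j : ℕ, j ≤ k → ContinuousOn (D j) (Icc (0 : Fin k → ℝ) 1))
    (j : ℕ) (hj : j ≤ k) (y : Fin k → ℝ) (hy : y ∈ Icc (0:Fin k → ℝ) 1) :
    IntegrableOn (fun w : Fin k → ℝ =>
        (∏ i : Fin k, if (i:ℕ) < j then (if w i ≤ y i then (1:ℝ) else 0) else 1)
          * D j (fun i => if (i:ℕ) < j then w i else y i))
      (Icc 0 1) := by
  have hDcont : ContinuousOn (fun w : Fin k → ℝ =>
      D j (fun i => if (i:ℕ) < j then w i else y i)) (Icc 0 1) :=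
    (hcont j hj).comp (proj_continuous j y).continuousOn
      (fun w hw => proj_mem_cube j hy hw)
  have hDint : IntegrableOn (fun w : Fin k → ℝ =>
      D j (fun i => if (i:ℕ) < j then w i else y i)) (Icc 0 1) :=
    hDcont.integrableOn_compact isCompact_Icc
  refine Integrable.mono' hDint.norm ?_ ?_
  · exact AEStronglyMeasurable.mul ((ind_measurable j y).aestronglyMeasurable)
      (hDcont.aestronglyMeasurable measurableSet_Icc)
  · refine Filter.Eventually.of_forall fun w => ?_
    rw [norm_mul]
    have h1 : ‖∏ i : Fin k, if (i:ℕ) < j then (if w i ≤ y i then (1:ℝ) else 0) else 1‖ ≤ 1 := by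
      rw [Real.norm_eq_abs, Finset.abs_prod]
      refine Finset.prod_le_one (fun i _ => abs_nonneg _) (fun i _ => ?_)
      by_cases h : (i:ℕ) < j <;> by_cases h2 : w i ≤ y i <;> simp [h, h2]
    calc ‖∏ i : Fin k, if (i:ℕ) < j then (if w i ≤ y i then (1:ℝ) else 0) else 1‖
          * ‖D j (fun i => if (i:ℕ) < j then w i else y i)‖
        ≤ 1 * ‖D j (fun i => if (i:ℕ) < j then w i else y i)‖ :=
          mul_le_mul_of_nonneg_right h1 (norm_nonneg _)
      _ = _ := one_mul _

lemma corner {k : ℕ} (g : (Fin k → ℝ) → ℝ) (D : ℕ → (Fin k → ℝ) → ℝ) (hD0 : D 0 = g)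
    (hderiv : ∀ j : Fin k, ∀ x ∈ Icc (0 : Fin k → ℝ) 1,
      HasDerivWithinAt (fun t => D (j : ℕ) (Function.update x j t))
        (D ((j : ℕ) + 1) x) (Icc 0 1) (x j))
    (hcont : ∀ j : ℕ, j ≤ k → ContinuousOn (D j) (Icc (0 : Fin k → ℝ) 1)) :
    ∀ j : ℕ, j ≤ k → ∀ y ∈ Icc (0:Fin k → ℝ) 1,
    ∫ w in Icc (0:Fin k→ℝ) 1,
        (∏ i : Fin k, if (i:ℕ) < j then (if w i ≤ y i then (1:ℝ) else 0) else 1)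
          * D j (fun i => if (i:ℕ) < j then w i else y i)
      = ∑ α ∈ Finset.univ.filter (fun α : Fin k → Bool => ∀ i : Fin k, α i = true → (i:ℕ) < j),
          (-1:ℝ) ^ (Finset.univ.filter fun i => α i = true).card
            * g (fun i => if α i then 0 else y i) := by
  intro j
  induction j with
  | zero =>
    intro _ y hy
    have h1 : (fun w : Fin k → ℝ =>
        (∏ i : Fin k, if (i:ℕ) < 0 then (if w i ≤ y i then (1:ℝ) else 0) else 1)
          * D 0 (fun i => if (i:ℕ) < 0 then w i else y i)) = fun _ => g y := by
      funext w; simp [hD0]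
    rw [h1]
    have h2 : Finset.univ.filter (fun α : Fin k → Bool => ∀ i : Fin k, α i = true → (i:ℕ) < 0)
        = {fun _ => false} := by
      ext α
      simp only [Finset.mem_filter, Finset.mem_univ, true_and, Finset.mem_singleton]
      constructor
      · intro h; funext i
        by_contra hc
        exact Nat.not_lt_zero _ (h i (by simpa using hc))
      · rintro rfl; intro i h; simp at h
    rw [h2, Finset.sum_singleton]
    have h3 : (Finset.univ.filter fun i : Fin k => (fun _ => false) i = true) = ∅ := by
      simp
    rw [integral_const, h3]
    simp only [Finset.card_empty, pow_zero, one_mul]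
    rw [restrict_cube k]
    have : (Measure.pi (fun _ : Fin k => (volume : Measure ℝ).restrict (Icc 0 1))) univ = 1 :=
      measure_univ
    simp [Measure.restrict_apply, this]
  | succ j ih =>
    intro hjk y hy
    have hjk' : j < k := Nat.lt_of_succ_le hjk
    set J : Fin k := ⟨j, hjk'⟩ with hJ
    have hJval : (J : ℕ) = j := rfl
    set y' : Fin k → ℝ := Function.update y J 0 with hy'def
    have hy' : y' ∈ Icc (0:Fin k → ℝ) 1 :=
      mem_cube_update hy J ⟨le_rfl, zero_le_one⟩
    -- inner pointwise decomposition
    have hpoint : ∀ w ∈ Icc (0:Fin k → ℝ) 1, ∀ t : ℝ,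
        (∏ i : Fin k, if (i:ℕ) < j+1 then (if Function.update w J t i ≤ y i then (1:ℝ) else 0) else 1)
          * D (j+1) (fun i => if (i:ℕ) < j+1 then Function.update w J t i else y i)
        = (∏ i : Fin k, if (i:ℕ) < j then (if w i ≤ y i then (1:ℝ) else 0) else 1)
          * ((if t ≤ y J then (1:ℝ) else 0)
             * D (j+1) (Function.update (fun i => if (i:ℕ) < j then w i else y i) J t)) := by
      intro w _ t
      have harg : (fun i : Fin k => if (i:ℕ) < j+1 then Function.update w J t i else y i)
          = Function.update (fun i : Fin k => if (i:ℕ) < j then w i else y i) J t := by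
        funext i
        rcases eq_or_ne i J with rfl | h
        · simp [hJval]
        · have hij : (i:ℕ) ≠ j := fun hc => h (Fin.ext hc)
          have : ((i:ℕ) < j+1) ↔ ((i:ℕ) < j) := by
            rw [Nat.lt_succ_iff_lt_or_eq]
            exact ⟨fun hc => hc.resolve_right hij, Or.inl⟩
          simp [Function.update_of_ne h, this]
      have hprod : (∏ i : Fin k, if (i:ℕ) < j+1 then
            (if Function.update w J t i ≤ y i then (1:ℝ) else 0) else 1)
          = (if t ≤ y J then (1:ℝ) else 0)
            * ∏ i : Fin k, if (i:ℕ) < j then (if w i ≤ y i then (1:ℝ) else 0) else 1 := by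
        rw [← Finset.mul_prod_erase Finset.univ _ (Finset.mem_univ J)]
        have hJfac : (if (J:ℕ) < j+1 then
            (if Function.update w J t J ≤ y J then (1:ℝ) else 0) else 1)
            = (if t ≤ y J then (1:ℝ) else 0) := by
          simp [hJval]
        rw [hJfac]
        have herase : ∏ i ∈ Finset.univ.erase J,
              (if (i:ℕ) < j+1 then (if Function.update w J t i ≤ y i then (1:ℝ) else 0) else 1)
            = ∏ i ∈ Finset.univ.erase J,
              (if (i:ℕ) < j then (if w i ≤ y i then (1:ℝ) else 0) else 1) := by
          refine Finset.prod_congr rfl (fun i hi => ?_)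
          have h : i ≠ J := Finset.ne_of_mem_erase hi
          have hij : (i:ℕ) ≠ j := fun hc => h (Fin.ext hc)
          have hiff : ((i:ℕ) < j+1) ↔ ((i:ℕ) < j) := by
            rw [Nat.lt_succ_iff_lt_or_eq]
            exact ⟨fun hc => hc.resolve_right hij, Or.inl⟩
          simp [Function.update_of_ne h, hiff]
        rw [herase, ← Finset.mul_prod_erase Finset.univ
          (fun i : Fin k => if (i:ℕ) < j then (if w i ≤ y i then (1:ℝ) else 0) else 1)
          (Finset.mem_univ J)]
        have : (if (J:ℕ) < j then (if w J ≤ y J then (1:ℝ) else 0) else 1) = 1 := by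
          simp [hJval]
        rw [this, one_mul]
      rw [hprod, harg]
      ring
    -- peel
    rw [peel J _ (integrand_integrable D hcont (j+1) hjk y hy)]
    -- compute inner integral
    have hinner : ∀ w ∈ Icc (0:Fin k → ℝ) 1,
        (∫ t in Icc (0:ℝ) 1,
          (∏ i : Fin k, if (i:ℕ) < j+1 then
              (if Function.update w J t i ≤ y i then (1:ℝ) else 0) else 1)
            * D (j+1) (fun i => if (i:ℕ) < j+1 then Function.update w J t i else y i))
        = ((∏ i : Fin k, if (i:ℕ) < j then (if w i ≤ y i then (1:ℝ) else 0) else 1)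
            * D j (fun i => if (i:ℕ) < j then w i else y i))
          - ((∏ i : Fin k, if (i:ℕ) < j then (if w i ≤ y' i then (1:ℝ) else 0) else 1)
            * D j (fun i => if (i:ℕ) < j then w i else y' i)) := by
      intro w hw
      have hz : (fun i : Fin k => if (i:ℕ) < j then w i else y i) ∈ Icc (0:Fin k → ℝ) 1 :=
        proj_mem_cube j hy hw
      calc (∫ t in Icc (0:ℝ) 1,
          (∏ i : Fin k, if (i:ℕ) < j+1 then
              (if Function.update w J t i ≤ y i then (1:ℝ) else 0) else 1)
            * D (j+1) (fun i => if (i:ℕ) < j+1 then Function.update w J t i else y i))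
          = ∫ t in Icc (0:ℝ) 1,
            (∏ i : Fin k, if (i:ℕ) < j then (if w i ≤ y i then (1:ℝ) else 0) else 1)
              * ((if t ≤ y J then (1:ℝ) else 0)
                * D (j+1) (Function.update (fun i => if (i:ℕ) < j then w i else y i) J t)) := by
            refine setIntegral_congr_fun measurableSet_Icc (fun t _ => ?_)
            exact hpoint w hw t
        _ = (∏ i : Fin k, if (i:ℕ) < j then (if w i ≤ y i then (1:ℝ) else 0) else 1)
              * ∫ t in Icc (0:ℝ) 1, (if t ≤ y J then (1:ℝ) else 0)
                * D (j+1) (Function.update (fun i => if (i:ℕ) < j then w i else y i) J t) :=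
            integral_const_mul _ _
        _ = _ := by
            have hftc := ftc_coord D hderiv hcont J _ hz (y J) ⟨hy.1 J, hy.2 J⟩
            rw [hJval] at hftc
            rw [hftc]
            have hzJ : (fun i : Fin k => if (i:ℕ) < j then w i else y i) J = y J := by
              simp [hJval]
            have h1 : Function.update (fun i : Fin k => if (i:ℕ) < j then w i else y i) J (y J)
                = (fun i : Fin k => if (i:ℕ) < j then w i else y i) := by
              rw [← hzJ]; exact Function.update_eq_self _ _
            have h2 : Function.update (fun i : Fin k => if (i:ℕ) < j then w i else y i) J 0
                = (fun i : Fin k => if (i:ℕ) < j then w i else y' i) := by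
              funext i
              rcases eq_or_ne i J with rfl | h
              · simp [hy'def, hJval]
              · simp [Function.update_of_ne h, hy'def]
            have h3 : (∏ i : Fin k, if (i:ℕ) < j then (if w i ≤ y' i then (1:ℝ) else 0) else 1)
                = (∏ i : Fin k, if (i:ℕ) < j then (if w i ≤ y i then (1:ℝ) else 0) else 1) := by
              refine Finset.prod_congr rfl (fun i _ => ?_)
              by_cases hij : (i:ℕ) < j
              · have h : i ≠ J := fun hc => by
                  rw [hc, hJval] at hij; exact lt_irrefl _ hij
                simp [hij, hy'def, Function.update_of_ne h]
              · simp [hij]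
            rw [h1, h2, h3]
            ring
    rw [setIntegral_congr_fun measurableSet_Icc hinner]
    rw [integral_sub (integrand_integrable D hcont j (Nat.le_of_succ_le hjk) y hy)
      (integrand_integrable D hcont j (Nat.le_of_succ_le hjk) y' hy')]
    rw [ih (Nat.le_of_succ_le hjk) y hy, ih (Nat.le_of_succ_le hjk) y' hy']
    -- now the combinatorial identity
    classical
    set S1 := Finset.univ.filter (fun α : Fin k → Bool => ∀ i : Fin k, α i = true → (i:ℕ) < j+1)
      with hS1
    set S0 := Finset.univ.filter (fun α : Fin k → Bool => ∀ i : Fin k, α i = true → (i:ℕ) < j)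
      with hS0
    have hsplit : ∑ α ∈ S1, (-1:ℝ) ^ (Finset.univ.filter fun i => α i = true).card
            * g (fun i => if α i then 0 else y i)
        = (∑ α ∈ S1.filter (fun α => α J = false),
            (-1:ℝ) ^ (Finset.univ.filter fun i => α i = true).card
              * g (fun i => if α i then 0 else y i))
          + ∑ α ∈ S1.filter (fun α => ¬ (α J = false)),
            (-1:ℝ) ^ (Finset.univ.filter fun i => α i = true).card
              * g (fun i => if α i then 0 else y i) :=
      (Finset.sum_filter_add_sum_filter_not _ _ _).symm
    have hfalse : S1.filter (fun α => α J = false) = S0 := by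
      ext α
      simp only [hS1, hS0, Finset.mem_filter, Finset.mem_univ, true_and, and_comm]
      constructor
      · rintro ⟨hf, h1⟩ i hi
        have := h1 i hi
        rcases Nat.lt_succ_iff_lt_or_eq.1 this with h | h
        · exact h
        · exfalso
          have : i = J := Fin.ext h
          rw [this, hf] at hi
          exact Bool.false_ne_true hi
      · intro h
        refine ⟨?_, fun i hi => Nat.lt_succ_of_lt (h i hi)⟩
        by_contra hc
        have : α J = true := by
          cases hαJ : α J
          · exact absurd hαJ hc
          · rfl
        exact lt_irrefl j (by simpa [hJval] using h J this)
    have htrue : ∑ α ∈ S1.filter (fun α => ¬ (α J = false)),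
            (-1:ℝ) ^ (Finset.univ.filter fun i => α i = true).card
              * g (fun i => if α i then 0 else y i)
        = - ∑ α ∈ S0, (-1:ℝ) ^ (Finset.univ.filter fun i => α i = true).card
              * g (fun i => if α i then 0 else y' i) := by
      rw [← Finset.sum_neg_distrib]
      refine Finset.sum_nbij' (fun α => Function.update α J false)
        (fun α => Function.update α J true) ?_ ?_ ?_ ?_ ?_
      · intro α hα
        simp only [hS1, Finset.mem_filter, Finset.mem_univ, true_and] at hα
        simp only [hS0, Finset.mem_filter, Finset.mem_univ, true_and]
        intro i hi
        have hiJ : i ≠ J := by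
          intro hc; rw [hc] at hi; simp at hi
        rw [Function.update_of_ne hiJ] at hi
        rcases Nat.lt_succ_iff_lt_or_eq.1 (hα.1 i hi) with h | h
        · exact h
        · exact absurd (Fin.ext h : i = J) hiJ
      · intro α hα
        simp only [hS0, Finset.mem_filter, Finset.mem_univ, true_and] at hα
        simp only [hS1, Finset.mem_filter, Finset.mem_univ, true_and]
        constructor
        · intro i hi
          rcases eq_or_ne i J with rfl | h
          · simp [hJval]
          · rw [Function.update_of_ne h] at hi
            exact Nat.lt_succ_of_lt (hα i hi)
        · simp
      · intro α hα
        simp only [hS1, Finset.mem_filter, Finset.mem_univ, true_and] at hα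
        have : α J = true := by
          cases h : α J
          · exact absurd h hα.2
          · rfl
        rw [Function.update_idem]
        rw [← this]
        exact Function.update_eq_self _ _
      · intro α hα
        simp only [hS0, Finset.mem_filter, Finset.mem_univ, true_and] at hα
        have : α J = false := by
          by_contra hc
          have : α J = true := by
            cases h : α J
            · exact absurd h hc
            · rfl
          exact lt_irrefl j (by simpa [hJval] using hα J this)
        rw [Function.update_idem, ← this]
        exact Function.update_eq_self _ _
      · intro α hα
        simp only [hS1, Finset.mem_filter, Finset.mem_univ, true_and] at hα
        have hαJ : α J = true := by
          cases h : α J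
          · exact absurd h hα.2
          · rfl
        have hcard : (Finset.univ.filter fun i => Function.update α J false i = true)
            = (Finset.univ.filter fun i => α i = true).erase J := by
          ext i
          simp only [Finset.mem_filter, Finset.mem_univ, true_and, Finset.mem_erase]
          rcases eq_or_ne i J with rfl | h
          · simp
          · simp [Function.update_of_ne h, h]
        have hJmem : J ∈ Finset.univ.filter fun i => α i = true := by
          simp [hαJ]
        have hcard2 : ((Finset.univ.filter fun i => α i = true).erase J).card + 1
            = (Finset.univ.filter fun i => α i = true).card := by
          rw [Finset.card_erase_of_mem hJmem]
          have : 1 ≤ (Finset.univ.filter fun i => α i = true).card :=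
            Finset.card_pos.2 ⟨J, hJmem⟩
          omega
        have harg : (fun i => if α i then 0 else y i)
            = (fun i => if Function.update α J false i then 0 else y' i) := by
          funext i
          rcases eq_or_ne i J with rfl | h
          · simp [hαJ, hy'def]
          · simp [Function.update_of_ne h, hy'def]
        rw [harg, hcard, ← hcard2, pow_succ]
        ring
    rw [hsplit, hfalse, htrue]
    ring

lemma pair_vanish {k : ℕ} (i0 : Fin k) (F : (Fin k → Bool) → ℝ)
    (hF : ∀ β : Fin k → Bool, F (Function.update β i0 true) = F (Function.update β i0 false)) :
    ∑ β : Fin k → Bool,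
      (-1:ℝ) ^ (Finset.univ.filter fun i => β i = true).card * F β = 0 := by
  classical
  rw [← Finset.sum_filter_add_sum_filter_not Finset.univ (fun β : Fin k → Bool => β i0 = false)]
  have hneg : ∑ β ∈ Finset.univ.filter (fun β : Fin k → Bool => ¬ (β i0 = false)),
      (-1:ℝ) ^ (Finset.univ.filter fun i => β i = true).card * F β
      = - ∑ β ∈ Finset.univ.filter (fun β : Fin k → Bool => β i0 = false),
      (-1:ℝ) ^ (Finset.univ.filter fun i => β i = true).card * F β := by
    rw [← Finset.sum_neg_distrib]
    refine Finset.sum_nbij' (fun β => Function.update β i0 false)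
      (fun β => Function.update β i0 true) ?_ ?_ ?_ ?_ ?_
    · intro β _
      simp
    · intro β _
      simp
    · intro β hβ
      simp only [Finset.mem_filter, Finset.mem_univ, true_and] at hβ
      have hβt : β i0 = true := by
        cases h : β i0
        · exact absurd h hβ
        · rfl
      rw [Function.update_idem, ← hβt]
      exact Function.update_eq_self _ _
    · intro β hβ
      simp only [Finset.mem_filter, Finset.mem_univ, true_and] at hβ
      rw [Function.update_idem, ← hβ]
      exact Function.update_eq_self _ _
    · intro β hβ
      simp only [Finset.mem_filter, Finset.mem_univ, true_and] at hβ
      have hβt : β i0 = true := by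
        cases h : β i0
        · exact absurd h hβ
        · rfl
      have hFβ : F β = F (Function.update β i0 false) := by
        have := hF β
        rwa [show Function.update β i0 true = β by rw [← hβt]; exact Function.update_eq_self _ _]
          at this
      have hcard : (Finset.univ.filter fun i => Function.update β i0 false i = true)
          = (Finset.univ.filter fun i => β i = true).erase i0 := by
        ext i
        simp only [Finset.mem_filter, Finset.mem_univ, true_and, Finset.mem_erase]
        rcases eq_or_ne i i0 with rfl | h
        · simp
        · simp [Function.update_of_ne h, h]
      have hi0mem : i0 ∈ Finset.univ.filter fun i => β i = true := by simp [hβt]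
      have hcard2 : ((Finset.univ.filter fun i => β i = true).erase i0).card + 1
          = (Finset.univ.filter fun i => β i = true).card := by
        rw [Finset.card_erase_of_mem hi0mem]
        have : 1 ≤ (Finset.univ.filter fun i => β i = true).card :=
          Finset.card_pos.2 ⟨i0, hi0mem⟩
        omega
      rw [hFβ, hcard, ← hcard2, pow_succ]
      ring
  rw [hneg]
  ring

/-- Identity (A.4) of Hall–Yatchew:
`g = ∑_{β ∈ {0,1}^k} (−1)^{|β|} M_β N g − ∑_{β ≠ 0} (−1)^{|β|} M_β g`.
Here `D j` is the mixed partial of `g` in the first `j` coordinates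
(so `D k = g^{(1,…,1)}`), `(N g)(y) = ∫₀^{y₁}⋯∫₀^{y_k} g^{(1,…,1)}(w) dw`
is written as a cube integral against indicators, and `M_β` is realized as
integration over the unit cube in the coordinates with `β_i = 1`. -/
theorem identity_A4 (k : ℕ)
    (g : (Fin k → ℝ) → ℝ) (D : ℕ → (Fin k → ℝ) → ℝ) (hD0 : D 0 = g)
    (hderiv : ∀ j : Fin k, ∀ x ∈ Icc (0 : Fin k → ℝ) 1,
      HasDerivWithinAt (fun t => D (j : ℕ) (Function.update x j t))
        (D ((j : ℕ) + 1) x) (Icc 0 1) (x j))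
    (hcont : ∀ j : ℕ, j ≤ k → ContinuousOn (D j) (Icc (0 : Fin k → ℝ) 1))
    (x : Fin k → ℝ) (hx : x ∈ Icc (0 : Fin k → ℝ) 1) :
    g x =
      (∑ β : Fin k → Bool,
        (-1 : ℝ) ^ (Finset.univ.filter fun i => β i = true).card *
          ∫ u in Icc (0 : Fin k → ℝ) 1,
            (∫ w in Icc (0 : Fin k → ℝ) 1,
              (∏ i : Fin k,
                if w i ≤ (if β i then u i else x i) then (1:ℝ) else 0) * D k w))
      - ∑ β ∈ Finset.univ.filter (fun β : Fin k → Bool => β ≠ fun _ => false),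
          (-1 : ℝ) ^ (Finset.univ.filter fun i => β i = true).card *
            ∫ u in Icc (0 : Fin k → ℝ) 1,
              g (fun i => if β i then u i else x i) := by
  classical
  have hvol1 : (volume.restrict (Icc (0:Fin k → ℝ) 1)) univ = 1 := by
    rw [restrict_cube k]
    exact measure_univ
  have hgcont : ContinuousOn g (Icc (0:Fin k → ℝ) 1) := hD0 ▸ hcont 0 (Nat.zero_le k)
  have hx0 : ∀ i, (0:ℝ) ≤ x i := fun i => hx.1 i
  have hx1 : ∀ i, x i ≤ (1:ℝ) := fun i => hx.2 i
  -- membership of mixtures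
  have hmix : ∀ (α β : Fin k → Bool) (u : Fin k → ℝ), u ∈ Icc (0:Fin k → ℝ) 1 →
      (fun i => if α i then 0 else if β i then u i else x i) ∈ Icc (0:Fin k → ℝ) 1 := by
    intro α β u hu
    constructor <;> intro i <;> simp only [Pi.zero_apply, Pi.one_apply] <;>
      rcases hαi : α i with _ | _ <;> rcases hβi : β i with _ | _ <;>
      simp only [hαi, hβi, if_true, if_false, Bool.false_eq_true] <;>
      first
        | exact le_refl _
        | exact zero_le_one
        | exact hx0 i
        | exact hx1 i
        | exact hu.1 i
        | exact hu.2 i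
  have hmix2 : ∀ (β : Fin k → Bool) (u : Fin k → ℝ), u ∈ Icc (0:Fin k → ℝ) 1 →
      (fun i => if β i then u i else x i) ∈ Icc (0:Fin k → ℝ) 1 := by
    intro β u hu
    constructor <;> intro i <;> simp only [Pi.zero_apply, Pi.one_apply] <;>
      rcases hβi : β i with _ | _ <;>
      simp only [hβi, if_true, if_false, Bool.false_eq_true] <;>
      first
        | exact hx0 i
        | exact hx1 i
        | exact hu.1 i
        | exact hu.2 i
  -- the corner identity at level k, cleaned up
  have hfull : ∀ y ∈ Icc (0:Fin k → ℝ) 1,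
      (∫ w in Icc (0:Fin k→ℝ) 1,
        (∏ i : Fin k, if w i ≤ y i then (1:ℝ) else 0) * D k w)
      = ∑ α : Fin k → Bool,
          (-1:ℝ) ^ (Finset.univ.filter fun i => α i = true).card
            * g (fun i => if α i then 0 else y i) := by
    intro y hy
    have h1 : (fun w : Fin k → ℝ =>
        (∏ i : Fin k, if w i ≤ y i then (1:ℝ) else 0) * D k w)
        = (fun w : Fin k → ℝ =>
          (∏ i : Fin k, if (i:ℕ) < k then (if w i ≤ y i then (1:ℝ) else 0) else 1)
            * D k (fun i => if (i:ℕ) < k then w i else y i)) := by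
      funext w
      congr 1
      · exact Finset.prod_congr rfl fun i _ => by simp [i.isLt]
      · congr 1
        funext i
        simp [i.isLt]
    rw [h1, corner g D hD0 hderiv hcont k le_rfl y hy]
    rw [Finset.filter_true_of_mem (fun α _ => fun i _ => i.isLt)]
  -- integrability of the corner pieces
  have hgint : ∀ (α β : Fin k → Bool),
      IntegrableOn (fun u : Fin k → ℝ =>
        g (fun i => if α i then 0 else if β i then u i else x i)) (Icc 0 1) := by
    intro α β
    have hc : Continuous (fun u : Fin k → ℝ =>
        (fun i => if α i then 0 else if β i then u i else x i)) := by
      refine continuous_pi fun i => ?_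
      rcases hαi : α i with _ | _ <;> rcases hβi : β i with _ | _ <;>
        simp [hαi, hβi, continuous_const, continuous_apply]
    exact ((hgcont.comp hc.continuousOn (fun u hu => hmix α β u hu)).integrableOn_compact
      isCompact_Icc)
  -- rewrite the first big sum
  have hstep : ∀ β : Fin k → Bool,
      (∫ u in Icc (0 : Fin k → ℝ) 1,
        (∫ w in Icc (0 : Fin k → ℝ) 1,
          (∏ i : Fin k, if w i ≤ (if β i then u i else x i) then (1:ℝ) else 0) * D k w))
      = ∑ α : Fin k → Bool,
          (-1:ℝ) ^ (Finset.univ.filter fun i => α i = true).card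
            * ∫ u in Icc (0 : Fin k → ℝ) 1,
                g (fun i => if α i then 0 else if β i then u i else x i) := by
    intro β
    have h2 : ∀ u ∈ Icc (0:Fin k → ℝ) 1,
        (∫ w in Icc (0 : Fin k → ℝ) 1,
          (∏ i : Fin k, if w i ≤ (if β i then u i else x i) then (1:ℝ) else 0) * D k w)
        = ∑ α : Fin k → Bool,
            (-1:ℝ) ^ (Finset.univ.filter fun i => α i = true).card
              * g (fun i => if α i then 0 else if β i then u i else x i) :=
      fun u hu => hfull _ (hmix2 β u hu)
    rw [setIntegral_congr_fun measurableSet_Icc h2]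
    rw [integral_finset_sum _ (fun α _ => ((hgint α β).const_mul _))]
    exact Finset.sum_congr rfl fun α _ => integral_const_mul _ _
  simp only [hstep]
  set K : (Fin k → Bool) → (Fin k → Bool) → ℝ := fun α β =>
    ∫ u in Icc (0 : Fin k → ℝ) 1,
      g (fun i => if α i then 0 else if β i then u i else x i) with hK
  set c : (Fin k → Bool) → ℝ := fun β =>
    (-1:ℝ) ^ (Finset.univ.filter fun i => β i = true).card with hc
  have hswap : (∑ β : Fin k → Bool, c β * ∑ α : Fin k → Bool, c α * K α β)
      = ∑ α : Fin k → Bool, c α * ∑ β : Fin k → Bool, c β * K α β := by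
    simp_rw [Finset.mul_sum]
    rw [Finset.sum_comm]
    refine Finset.sum_congr rfl fun α _ => Finset.sum_congr rfl fun β _ => by ring
  rw [hswap]
  have hvanish : ∀ α : Fin k → Bool, α ≠ (fun _ => false) →
      (∑ β : Fin k → Bool, c β * K α β) = 0 := by
    intro α hα
    obtain ⟨i0, hi0⟩ : ∃ i0, α i0 = true := by
      by_contra hc'
      push_neg at hc'
      exact hα (funext fun i => by
        cases h : α i
        · rfl
        · exact absurd h (hc' i))
    refine pair_vanish i0 (fun β => K α β) (fun β => ?_)
    simp only [hK]
    congr 1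
    funext u
    congr 1
    funext i
    rcases eq_or_ne i i0 with rfl | h
    · simp [hi0]
    · simp [Function.update_of_ne h]
  have hαsplit : (∑ α : Fin k → Bool, c α * ∑ β : Fin k → Bool, c β * K α β)
      = ∑ β : Fin k → Bool, c β * K (fun _ => false) β := by
    rw [← Finset.add_sum_erase Finset.univ _ (Finset.mem_univ (fun _ => false : Fin k → Bool))]
    have hzero : ∑ α ∈ Finset.univ.erase (fun _ => false : Fin k → Bool),
        c α * ∑ β : Fin k → Bool, c β * K α β = 0 := by
      refine Finset.sum_eq_zero fun α hα => ?_
      rw [hvanish α (Finset.ne_of_mem_erase hα)]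
      ring
    rw [hzero, add_zero]
    have hc0 : c (fun _ => false) = 1 := by simp [hc]
    rw [hc0, one_mul]
  rw [hαsplit]
  have hKc0 : ∀ β : Fin k → Bool, K (fun _ => false) β
      = ∫ u in Icc (0 : Fin k → ℝ) 1, g (fun i => if β i then u i else x i) := by
    intro β
    simp only [hK]
    congr 1
  simp only [hKc0]
  have hfilter : Finset.univ.filter (fun β : Fin k → Bool => β ≠ fun _ => false)
      = Finset.univ.erase (fun _ => false) := Finset.filter_ne' _ _
  rw [hfilter]
  rw [← Finset.add_sum_erase Finset.univ
    (fun β : Fin k → Bool => c β *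
      ∫ u in Icc (0 : Fin k → ℝ) 1, g (fun i => if β i then u i else x i))
    (Finset.mem_univ (fun _ => false : Fin k → Bool))]
  have hc0 : c (fun _ => false) = 1 := by simp [hc]
  have hgx : (∫ u in Icc (0 : Fin k → ℝ) 1,
      g (fun i => if (fun _ => false : Fin k → Bool) i then u i else x i)) = g x := by
    have : (fun u : Fin k → ℝ =>
        g (fun i => if (fun _ => false : Fin k → Bool) i then u i else x i)) = fun _ => g x := by
      funext u
      congr 1
    rw [this, integral_const]
    rw [measureReal_def, hvol1]
    simp
  rw [hc0, one_mul, hgx]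
  ring
end

section
/- Let g : [0,1]² → ℝ be C². Then for every (x₁,x₂) ∈ [0,1]², g(x₁,x₂) = ∑_{α ∈ {0,1}²} ∫_{[0,1]²} χ_{α₁}(u₁,x₁) χ_{α₂}(u₂,x₂) g^α(u₁,u₂) du₁ du₂, where χ₀(u,x) = 1, χ₁(u,x) = u − 1 + 1_{u ≤ x}, and g^α denotes the mixed partial derivative of g in the coordinates j with α_j = 1. -/
open MeasureTheory Set

/-- The kernel `χ_j`: `χ₀(u,x) = 1` and `χ₁(u,x) = u - 1 + 1_{u ≤ x}`. -/
noncomputable def chiHY (j : Bool) (u x : ℝ) : ℝ :=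
  if j then u - 1 + (if u ≤ x then 1 else 0) else 1

private lemma chi_split (φ : ℝ → ℝ) (x u : ℝ) :
    chiHY true u x * φ u = (u - 1) * φ u + (Iic x).indicator φ u := by
  simp only [chiHY, if_true, indicator, mem_Iic]
  split_ifs <;> ring

private lemma chiIntegrable (φ : ℝ → ℝ) (hφ : ContinuousOn φ (Icc 0 1)) (x : ℝ) :
    IntervalIntegrable (fun u => chiHY true u x * φ u) volume 0 1 := by
  have hφi : IntervalIntegrable φ volume 0 1 := by
    apply ContinuousOn.intervalIntegrable; rwa [uIcc_of_le (zero_le_one)]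
  have h1 : IntervalIntegrable (fun u => (u - 1) * φ u) volume 0 1 := by
    apply ContinuousOn.intervalIntegrable
    rw [uIcc_of_le (zero_le_one)]
    exact (continuousOn_id.sub continuousOn_const).mul hφ
  have h2 : IntervalIntegrable ((Iic x).indicator φ) volume 0 1 :=
    ⟨hφi.1.indicator measurableSet_Iic, hφi.2.indicator measurableSet_Iic⟩
  have heq : (fun u => chiHY true u x * φ u)
      = fun u => (u - 1) * φ u + (Iic x).indicator φ u := funext (chi_split φ x)
  rw [heq]; exact h1.add h2

private lemma integral_chi (φ : ℝ → ℝ) (hφ : ContinuousOn φ (Icc 0 1)) {x : ℝ}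
    (hx : x ∈ Icc (0:ℝ) 1) :
    ∫ u in (0:ℝ)..1, chiHY true u x * φ u
      = (∫ u in (0:ℝ)..1, (u - 1) * φ u) + ∫ u in (0:ℝ)..x, φ u := by
  have hφi : IntervalIntegrable φ volume 0 1 := by
    apply ContinuousOn.intervalIntegrable; rwa [uIcc_of_le (zero_le_one)]
  have h1 : IntervalIntegrable (fun u => (u - 1) * φ u) volume 0 1 := by
    apply ContinuousOn.intervalIntegrable
    rw [uIcc_of_le (zero_le_one)]
    exact (continuousOn_id.sub continuousOn_const).mul hφ
  have h2 : IntervalIntegrable ((Iic x).indicator φ) volume 0 1 :=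
    ⟨hφi.1.indicator measurableSet_Iic, hφi.2.indicator measurableSet_Iic⟩
  calc ∫ u in (0:ℝ)..1, chiHY true u x * φ u
      = ∫ u in (0:ℝ)..1, ((u - 1) * φ u + (Iic x).indicator φ u) :=
        intervalIntegral.integral_congr (fun u _ => chi_split φ x u)
    _ = (∫ u in (0:ℝ)..1, (u - 1) * φ u) + ∫ u in (0:ℝ)..1, (Iic x).indicator φ u :=
        intervalIntegral.integral_add h1 h2
    _ = (∫ u in (0:ℝ)..1, (u - 1) * φ u) + ∫ u in (0:ℝ)..x, φ u := by
        rw [show Iic x = {y : ℝ | y ≤ x} from rfl, intervalIntegral.integral_indicator hx]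

private lemma oneDim (f f' : ℝ → ℝ)
    (hf : ∀ t ∈ Icc (0:ℝ) 1, HasDerivWithinAt f (f' t) (Icc 0 1) t)
    (hf' : ContinuousOn f' (Icc 0 1)) {x : ℝ} (hx : x ∈ Icc (0:ℝ) 1) :
    f x = (∫ u in (0:ℝ)..1, f u) + ∫ u in (0:ℝ)..1, chiHY true u x * f' u := by
  have hfc : ContinuousOn f (Icc 0 1) := fun t ht => (hf t ht).continuousWithinAt
  have hfi : IntervalIntegrable f volume 0 1 := by
    apply ContinuousOn.intervalIntegrable; rwa [uIcc_of_le (zero_le_one)]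
  have I1 : ∫ u in (0:ℝ)..x, f' u = f x - f 0 := by
    apply intervalIntegral.integral_eq_sub_of_hasDeriv_right_of_le hx.1
    · exact hfc.mono (Icc_subset_Icc le_rfl hx.2)
    · intro t ht
      have htI : t ∈ Ioo (0:ℝ) 1 := ⟨ht.1, lt_of_lt_of_le ht.2 hx.2⟩
      exact ((hf t (Ioo_subset_Icc_self htI)).hasDerivAt
        (Icc_mem_nhds htI.1 htI.2)).hasDerivWithinAt
    · apply ContinuousOn.intervalIntegrable
      exact hf'.mono (by rw [uIcc_of_le hx.1]; exact Icc_subset_Icc le_rfl hx.2)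
  have I3 : ∫ u in (0:ℝ)..1, (u - 1) * f' u = f 0 - ∫ u in (0:ℝ)..1, f u := by
    have key := intervalIntegral.integral_eq_sub_of_hasDeriv_right_of_le
      (f := fun u => (u - 1) * f u - ∫ t in (0:ℝ)..u, f t)
      (f' := fun u => (u - 1) * f' u) zero_le_one ?_ ?_ ?_
    · rw [key]
      simp only [sub_self, zero_mul, intervalIntegral.integral_same, sub_zero, zero_sub,
        neg_one_mul]
      ring
    · apply ContinuousOn.sub
      · exact (continuousOn_id.sub continuousOn_const).mul hfc
      · have h := intervalIntegral.continuousOn_primitive_interval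
          (f := f) (a := 0) (b := 1) (μ := volume) ?_
        · rwa [uIcc_of_le zero_le_one] at h
        · rw [uIcc_of_le zero_le_one]; exact hfc.integrableOn_Icc
    · intro t ht
      have h1 : HasDerivAt (fun u => (u - 1) * f u) (1 * f t + (t - 1) * f' t) t :=
        ((hasDerivAt_id t).sub_const 1).mul
          ((hf t (Ioo_subset_Icc_self ht)).hasDerivAt (Icc_mem_nhds ht.1 ht.2))
      have h2 : HasDerivAt (fun u => ∫ s in (0:ℝ)..u, f s) (f t) t := by
        apply intervalIntegral.integral_hasDerivAt_right
        · apply hfi.mono_set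
          rw [uIcc_of_le ht.1.le, uIcc_of_le zero_le_one]
          exact Icc_subset_Icc le_rfl ht.2.le
        · exact ⟨Icc 0 1, Icc_mem_nhds ht.1 ht.2, hfc.aestronglyMeasurable measurableSet_Icc⟩
        · exact hfc.continuousAt (Icc_mem_nhds ht.1 ht.2)
      show HasDerivWithinAt _ ((t - 1) * f' t) _ _
      have heq : (t - 1) * f' t = 1 * f t + (t - 1) * f' t - f t := by ring
      rw [heq]
      exact (h1.sub h2).hasDerivWithinAt
    · apply ContinuousOn.intervalIntegrable; rw [uIcc_of_le zero_le_one]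
      exact (continuousOn_id.sub continuousOn_const).mul hf'
  rw [integral_chi f' hf' hx, I1, I3]; ring

private noncomputable def clampI (t : ℝ) : ℝ := max 0 (min t 1)

private lemma clampI_mem (t : ℝ) : clampI t ∈ Icc (0:ℝ) 1 :=
  ⟨le_max_left _ _, max_le (by norm_num) (min_le_right _ _)⟩

private lemma clampI_eq {t : ℝ} (ht : t ∈ Icc (0:ℝ) 1) : clampI t = t := by
  simp only [clampI, min_eq_left ht.2, max_eq_right ht.1]

private lemma continuous_clampI : Continuous clampI :=
  continuous_const.max (continuous_id.min continuous_const)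

private lemma integral_congr01 {f g : ℝ → ℝ}
    (h : ∀ u ∈ Icc (0:ℝ) 1, f u = g u) :
    ∫ u in (0:ℝ)..1, f u = ∫ u in (0:ℝ)..1, g u :=
  intervalIntegral.integral_congr (by rwa [uIcc_of_le zero_le_one])

private lemma main2 (G G10 G01 G11 : ℝ → ℝ → ℝ)
    (h10 : ∀ x₁ ∈ Icc (0:ℝ) 1, ∀ x₂ ∈ Icc (0:ℝ) 1,
      HasDerivWithinAt (fun t => G t x₂) (G10 x₁ x₂) (Icc 0 1) x₁)
    (h01 : ∀ x₁ ∈ Icc (0:ℝ) 1, ∀ x₂ ∈ Icc (0:ℝ) 1,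
      HasDerivWithinAt (fun t => G x₁ t) (G01 x₁ x₂) (Icc 0 1) x₂)
    (h11 : ∀ x₁ ∈ Icc (0:ℝ) 1, ∀ x₂ ∈ Icc (0:ℝ) 1,
      HasDerivWithinAt (fun t => G10 x₁ t) (G11 x₁ x₂) (Icc 0 1) x₂)
    (hG : Continuous fun p : ℝ × ℝ => G p.1 p.2)
    (hG10 : Continuous fun p : ℝ × ℝ => G10 p.1 p.2)
    (hG01 : Continuous fun p : ℝ × ℝ => G01 p.1 p.2)
    (hG11 : Continuous fun p : ℝ × ℝ => G11 p.1 p.2)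
    {x₁ x₂ : ℝ} (hx₁ : x₁ ∈ Icc (0:ℝ) 1) (hx₂ : x₂ ∈ Icc (0:ℝ) 1) :
    G x₁ x₂ = (∫ u₁ in (0:ℝ)..1, ∫ u₂ in (0:ℝ)..1, G u₁ u₂)
      + (∫ u₁ in (0:ℝ)..1, ∫ u₂ in (0:ℝ)..1, chiHY true u₂ x₂ * G01 u₁ u₂)
      + (∫ u₁ in (0:ℝ)..1, chiHY true u₁ x₁ * ∫ u₂ in (0:ℝ)..1, G10 u₁ u₂)
      + (∫ u₁ in (0:ℝ)..1, chiHY true u₁ x₁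
          * ∫ u₂ in (0:ℝ)..1, chiHY true u₂ x₂ * G11 u₁ u₂) := by
  -- continuity of the parametrized integrals
  have contA : Continuous fun u₁ => ∫ u₂ in (0:ℝ)..1, G u₁ u₂ :=
    intervalIntegral.continuous_parametric_intervalIntegral_of_continuous' hG 0 1
  have contC : Continuous fun u₁ => ∫ u₂ in (0:ℝ)..1, G10 u₁ u₂ :=
    intervalIntegral.continuous_parametric_intervalIntegral_of_continuous' hG10 0 1
  have contB : Continuous fun u₁ => ∫ u₂ in (0:ℝ)..1, chiHY true u₂ x₂ * G01 u₁ u₂ := by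
    have hBeq : (fun u₁ => ∫ u₂ in (0:ℝ)..1, chiHY true u₂ x₂ * G01 u₁ u₂)
        = fun u₁ => (∫ u₂ in (0:ℝ)..1, (u₂ - 1) * G01 u₁ u₂)
            + ∫ u₂ in (0:ℝ)..x₂, G01 u₁ u₂ :=
      funext fun u₁ => integral_chi (G01 u₁)
        ((hG01.comp (Continuous.prodMk_right u₁)).continuousOn) hx₂
    rw [hBeq]
    exact (intervalIntegral.continuous_parametric_intervalIntegral_of_continuous'
        (f := fun u₁ u₂ => (u₂ - 1) * G01 u₁ u₂)
        (show Continuous fun p : ℝ × ℝ => (p.2 - 1) * G01 p.1 p.2 from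
          (continuous_snd.sub continuous_const).mul hG01) 0 1).add
      (intervalIntegral.continuous_parametric_intervalIntegral_of_continuous'
        (f := fun u₁ u₂ => G01 u₁ u₂) hG01 0 x₂)
  have contD : Continuous fun u₁ => ∫ u₂ in (0:ℝ)..1, chiHY true u₂ x₂ * G11 u₁ u₂ := by
    have hDeq : (fun u₁ => ∫ u₂ in (0:ℝ)..1, chiHY true u₂ x₂ * G11 u₁ u₂)
        = fun u₁ => (∫ u₂ in (0:ℝ)..1, (u₂ - 1) * G11 u₁ u₂)
            + ∫ u₂ in (0:ℝ)..x₂, G11 u₁ u₂ :=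
      funext fun u₁ => integral_chi (G11 u₁)
        ((hG11.comp (Continuous.prodMk_right u₁)).continuousOn) hx₂
    rw [hDeq]
    exact (intervalIntegral.continuous_parametric_intervalIntegral_of_continuous'
        (f := fun u₁ u₂ => (u₂ - 1) * G11 u₁ u₂)
        (show Continuous fun p : ℝ × ℝ => (p.2 - 1) * G11 p.1 p.2 from
          (continuous_snd.sub continuous_const).mul hG11) 0 1).add
      (intervalIntegral.continuous_parametric_intervalIntegral_of_continuous'
        (f := fun u₁ u₂ => G11 u₁ u₂) hG11 0 x₂)
  -- one-dimensional identity in the first variable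
  have step1 : G x₁ x₂ = (∫ u₁ in (0:ℝ)..1, G u₁ x₂)
      + ∫ u₁ in (0:ℝ)..1, chiHY true u₁ x₁ * G10 u₁ x₂ :=
    oneDim (fun t => G t x₂) (fun t => G10 t x₂)
      (fun t ht => h10 t ht x₂ hx₂)
      ((hG10.comp (continuous_id.prodMk continuous_const)).continuousOn) hx₁
  have stepA : (∫ u₁ in (0:ℝ)..1, G u₁ x₂)
      = (∫ u₁ in (0:ℝ)..1, ∫ u₂ in (0:ℝ)..1, G u₁ u₂)
        + ∫ u₁ in (0:ℝ)..1, ∫ u₂ in (0:ℝ)..1, chiHY true u₂ x₂ * G01 u₁ u₂ := by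
    rw [← intervalIntegral.integral_add (contA.intervalIntegrable 0 1) (contB.intervalIntegrable 0 1)]
    apply integral_congr01
    intro u₁ hu₁
    exact oneDim (G u₁) (G01 u₁) (fun t ht => h01 u₁ hu₁ t ht)
      ((hG01.comp (Continuous.prodMk_right u₁)).continuousOn) hx₂
  have stepB : (∫ u₁ in (0:ℝ)..1, chiHY true u₁ x₁ * G10 u₁ x₂)
      = (∫ u₁ in (0:ℝ)..1, chiHY true u₁ x₁ * ∫ u₂ in (0:ℝ)..1, G10 u₁ u₂)
        + ∫ u₁ in (0:ℝ)..1, chiHY true u₁ x₁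
            * ∫ u₂ in (0:ℝ)..1, chiHY true u₂ x₂ * G11 u₁ u₂ := by
    rw [← intervalIntegral.integral_add
      (chiIntegrable _ contC.continuousOn x₁) (chiIntegrable _ contD.continuousOn x₁)]
    apply integral_congr01
    intro u₁ hu₁
    have := oneDim (G10 u₁) (G11 u₁) (fun t ht => h11 u₁ hu₁ t ht)
      ((hG11.comp (Continuous.prodMk_right u₁)).continuousOn) hx₂
    rw [this, mul_add]
  rw [step1, stepA, stepB]; ring

/-- Theorem 1 of Hall–Yatchew in dimension `k = 2`. The sum over
`α ∈ {0,1}²` is taken over `Bool × Bool`, with `gd α` denoting the mixed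
partial derivative `g^α`. -/
theorem theorem1_dim_two (g g10 g01 g11 : ℝ → ℝ → ℝ)
    (h10 : ∀ x₁ ∈ Icc (0:ℝ) 1, ∀ x₂ ∈ Icc (0:ℝ) 1,
      HasDerivWithinAt (fun t => g t x₂) (g10 x₁ x₂) (Icc 0 1) x₁)
    (h01 : ∀ x₁ ∈ Icc (0:ℝ) 1, ∀ x₂ ∈ Icc (0:ℝ) 1,
      HasDerivWithinAt (fun t => g x₁ t) (g01 x₁ x₂) (Icc 0 1) x₂)
    (h11 : ∀ x₁ ∈ Icc (0:ℝ) 1, ∀ x₂ ∈ Icc (0:ℝ) 1,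
      HasDerivWithinAt (fun t => g10 x₁ t) (g11 x₁ x₂) (Icc 0 1) x₂)
    (hg : ContinuousOn (fun p : ℝ × ℝ => g p.1 p.2) (Icc 0 1 ×ˢ Icc 0 1))
    (hg10 : ContinuousOn (fun p : ℝ × ℝ => g10 p.1 p.2) (Icc 0 1 ×ˢ Icc 0 1))
    (hg01 : ContinuousOn (fun p : ℝ × ℝ => g01 p.1 p.2) (Icc 0 1 ×ˢ Icc 0 1))
    (hg11 : ContinuousOn (fun p : ℝ × ℝ => g11 p.1 p.2) (Icc 0 1 ×ˢ Icc 0 1))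
    (gd : Bool × Bool → ℝ → ℝ → ℝ)
    (hgd : gd (false, false) = g ∧ gd (true, false) = g10 ∧
      gd (false, true) = g01 ∧ gd (true, true) = g11) :
    ∀ x₁ ∈ Icc (0:ℝ) 1, ∀ x₂ ∈ Icc (0:ℝ) 1,
      g x₁ x₂ = ∑ α : Bool × Bool,
        ∫ u₁ in (0:ℝ)..1, ∫ u₂ in (0:ℝ)..1,
          chiHY α.1 u₁ x₁ * chiHY α.2 u₂ x₂ * gd α u₁ u₂ := by
  intro x₁ hx₁ x₂ hx₂
  have hmap : Continuous fun p : ℝ × ℝ => (clampI p.1, clampI p.2) :=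
    (continuous_clampI.comp continuous_fst).prodMk (continuous_clampI.comp continuous_snd)
  have hmem : ∀ p : ℝ × ℝ, (clampI p.1, clampI p.2) ∈ Icc (0:ℝ) 1 ×ˢ Icc (0:ℝ) 1 :=
    fun p => ⟨clampI_mem _, clampI_mem _⟩
  have hGc : Continuous fun p : ℝ × ℝ => g (clampI p.1) (clampI p.2) :=
    hg.comp_continuous hmap hmem
  have hG10c : Continuous fun p : ℝ × ℝ => g10 (clampI p.1) (clampI p.2) :=
    hg10.comp_continuous hmap hmem
  have hG01c : Continuous fun p : ℝ × ℝ => g01 (clampI p.1) (clampI p.2) :=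
    hg01.comp_continuous hmap hmem
  have hG11c : Continuous fun p : ℝ × ℝ => g11 (clampI p.1) (clampI p.2) :=
    hg11.comp_continuous hmap hmem
  have d10 : ∀ a ∈ Icc (0:ℝ) 1, ∀ b ∈ Icc (0:ℝ) 1,
      HasDerivWithinAt (fun t => g (clampI t) (clampI b))
        (g10 (clampI a) (clampI b)) (Icc 0 1) a := by
    intro a ha b hb
    rw [clampI_eq ha, clampI_eq hb]
    exact (h10 a ha b hb).congr (fun t ht => by rw [clampI_eq ht])
      (by rw [clampI_eq ha])
  have d01 : ∀ a ∈ Icc (0:ℝ) 1, ∀ b ∈ Icc (0:ℝ) 1,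
      HasDerivWithinAt (fun t => g (clampI a) (clampI t))
        (g01 (clampI a) (clampI b)) (Icc 0 1) b := by
    intro a ha b hb
    rw [clampI_eq ha, clampI_eq hb]
    exact (h01 a ha b hb).congr (fun t ht => by rw [clampI_eq ht])
      (by rw [clampI_eq hb])
  have d11 : ∀ a ∈ Icc (0:ℝ) 1, ∀ b ∈ Icc (0:ℝ) 1,
      HasDerivWithinAt (fun t => g10 (clampI a) (clampI t))
        (g11 (clampI a) (clampI b)) (Icc 0 1) b := by
    intro a ha b hb
    rw [clampI_eq ha, clampI_eq hb]
    exact (h11 a ha b hb).congr (fun t ht => by rw [clampI_eq ht])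
      (by rw [clampI_eq hb])
  have key := main2 (fun a b => g (clampI a) (clampI b))
    (fun a b => g10 (clampI a) (clampI b)) (fun a b => g01 (clampI a) (clampI b))
    (fun a b => g11 (clampI a) (clampI b)) d10 d01 d11 hGc hG10c hG01c hG11c hx₁ hx₂
  simp only [clampI_eq hx₁, clampI_eq hx₂] at key
  obtain ⟨e1, e2, e3, e4⟩ := hgd
  have chiF : ∀ u x : ℝ, chiHY false u x = 1 := fun _ _ => rfl
  rw [Fintype.sum_prod_type]
  simp only [Fintype.sum_bool, e1, e2, e3, e4, chiF, one_mul]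
  have E1 : (∫ u₁ in (0:ℝ)..1, ∫ u₂ in (0:ℝ)..1, g (clampI u₁) (clampI u₂))
      = ∫ u₁ in (0:ℝ)..1, ∫ u₂ in (0:ℝ)..1, g u₁ u₂ :=
    integral_congr01 fun u₁ hu₁ => integral_congr01 fun u₂ hu₂ => by
      rw [clampI_eq hu₁, clampI_eq hu₂]
  have E2 : (∫ u₁ in (0:ℝ)..1, ∫ u₂ in (0:ℝ)..1,
        chiHY true u₂ x₂ * g01 (clampI u₁) (clampI u₂))
      = ∫ u₁ in (0:ℝ)..1, ∫ u₂ in (0:ℝ)..1, chiHY true u₂ x₂ * g01 u₁ u₂ :=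
    integral_congr01 fun u₁ hu₁ => integral_congr01 fun u₂ hu₂ => by
      rw [clampI_eq hu₁, clampI_eq hu₂]
  have E3 : (∫ u₁ in (0:ℝ)..1, chiHY true u₁ x₁
        * ∫ u₂ in (0:ℝ)..1, g10 (clampI u₁) (clampI u₂))
      = ∫ u₁ in (0:ℝ)..1, ∫ u₂ in (0:ℝ)..1, chiHY true u₁ x₁ * g10 u₁ u₂ := by
    apply integral_congr01
    intro u₁ hu₁
    rw [intervalIntegral.integral_const_mul]
    exact congrArg _ (integral_congr01 fun u₂ hu₂ => by rw [clampI_eq hu₁, clampI_eq hu₂])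
  have E4 : (∫ u₁ in (0:ℝ)..1, chiHY true u₁ x₁
        * ∫ u₂ in (0:ℝ)..1, chiHY true u₂ x₂ * g11 (clampI u₁) (clampI u₂))
      = ∫ u₁ in (0:ℝ)..1, ∫ u₂ in (0:ℝ)..1,
          chiHY true u₁ x₁ * chiHY true u₂ x₂ * g11 u₁ u₂ := by
    apply integral_congr01
    intro u₁ hu₁
    have h5 : (∫ u₂ in (0:ℝ)..1, chiHY true u₁ x₁ * chiHY true u₂ x₂ * g11 u₁ u₂)
        = chiHY true u₁ x₁ * ∫ u₂ in (0:ℝ)..1, chiHY true u₂ x₂ * g11 u₁ u₂ := by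
      rw [← intervalIntegral.integral_const_mul]
      exact integral_congr01 fun u₂ _ => (mul_assoc _ _ _)
    rw [h5]
    exact congrArg _ (integral_congr01 fun u₂ hu₂ => by rw [clampI_eq hu₁, clampI_eq hu₂])
  rw [key, E1, E2, E3, E4]
  ring
end
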